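/- The jump rule is the perfectly inelastic collision rule: for every p₋ ∈ ℝⁿ, the post-impact momentum p₊ = P p₋ is the unique minimizer of the kinetic energy of the momentum difference, (p − p₋)ᵀ g⁻¹ (p − p₋), over all covectors p ∈ ℝⁿ satisfying the constraints ω g⁻¹ p = 0. -/

import Mathlib

open Matrix

/-- The jump rule is the perfectly inelastic collision rule: the post-impact momentum
`p₊ = P pm` is the unique minimizer of the kinetic energy of the momentum difference,
`(p − pm)ᵀ g⁻¹ (p − pm)`, over all covectors `p` satisfying the constraints
`ω g⁻¹ p = 0`. -/
theorem jump_rule_is_inelastic_collision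
    {n s : ℕ} (hn : 0 < n) (hs : 0 < s)
    (g : Matrix (Fin n) (Fin n) ℝ) (hg : g.PosDef)
    (ω : Matrix (Fin s) (Fin n) ℝ) (hω : LinearIndependent ℝ (fun i => ω i))
    (C : Matrix (Fin s) (Fin s) ℝ) (hC : C = ω * g⁻¹ * ωᵀ)
    (P : Matrix (Fin n) (Fin n) ℝ) (hP : P = 1 - ωᵀ * C⁻¹ * ω * g⁻¹) :
    ∀ pm : Fin n → ℝ,
      (ω * g⁻¹) *ᵥ (P *ᵥ pm) = 0 ∧
      ∀ p : Fin n → ℝ, (ω * g⁻¹) *ᵥ p = 0 →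
        ((P *ᵥ pm - pm) ⬝ᵥ (g⁻¹ *ᵥ (P *ᵥ pm - pm)) ≤ (p - pm) ⬝ᵥ (g⁻¹ *ᵥ (p - pm)) ∧
          ((p - pm) ⬝ᵥ (g⁻¹ *ᵥ (p - pm)) = (P *ᵥ pm - pm) ⬝ᵥ (g⁻¹ *ᵥ (P *ᵥ pm - pm)) →
            p = P *ᵥ pm)) := by
  have hginv : (g⁻¹).PosDef := hg.inv
  have hginvT : (g⁻¹)ᵀ = g⁻¹ := by
    have := hginv.isHermitian
    rwa [IsHermitian, conjTranspose_eq_transpose_of_trivial] at this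
  -- C is positive definite
  have hCpd : C.PosDef := by
    refine posDef_iff_dotProduct_mulVec.mpr ⟨?_, ?_⟩
    · rw [IsHermitian, conjTranspose_eq_transpose_of_trivial, hC]
      simp [transpose_mul, hginvT, Matrix.mul_assoc]
    · intro x hx
      have hy : x ᵥ* ω ≠ 0 := by
        intro h0
        apply hx
        have := Fintype.linearIndependent_iff.mp hω x ?_
        · funext i; exact this i
        · funext j
          have := congrFun h0 j
          simpa [vecMul, dotProduct, Finset.sum_apply, mul_comm] using this
      have key : star x ⬝ᵥ C *ᵥ x = (x ᵥ* ω) ⬝ᵥ (g⁻¹ *ᵥ (x ᵥ* ω)) := by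
        rw [hC, star_trivial, ← mulVec_mulVec, ← mulVec_mulVec, dotProduct_mulVec,
          mulVec_transpose]
      rw [key]
      have := hginv.dotProduct_mulVec_pos hy
      rwa [star_trivial] at this
  have hCdet : C.det ≠ 0 := hCpd.det_pos.ne'
  have hCinv : C * C⁻¹ = 1 := mul_nonsing_inv _ (isUnit_iff_ne_zero.mpr hCdet)
  have hCinvT : (C⁻¹)ᵀ = C⁻¹ := by
    have := hCpd.inv.isHermitian
    rwa [IsHermitian, conjTranspose_eq_transpose_of_trivial] at this
  -- key matrix identity
  have hkey : (ω * g⁻¹) * P = 0 := by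
    rw [hP, Matrix.mul_sub, Matrix.mul_one]
    have h1 : ω * g⁻¹ * (ωᵀ * C⁻¹ * ω * g⁻¹) = C * C⁻¹ * (ω * g⁻¹) := by
      rw [hC]; simp only [Matrix.mul_assoc]
    rw [h1, hCinv, Matrix.one_mul, sub_self]
  intro pm
  have hPpm : (ω * g⁻¹) *ᵥ (P *ᵥ pm) = 0 := by
    rw [mulVec_mulVec, hkey, zero_mulVec]
  refine ⟨hPpm, fun p hp => ?_⟩
  set q₀ : Fin n → ℝ := P *ᵥ pm - pm with hq₀
  set d : Fin n → ℝ := p - P *ᵥ pm with hd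
  have hpd : p - pm = d + q₀ := by rw [hd, hq₀]; abel
  have hdω : (ω * g⁻¹) *ᵥ d = 0 := by
    rw [hd, mulVec_sub, hp, hPpm, sub_zero]
  -- cross term vanishes
  have hcross : d ⬝ᵥ (g⁻¹ *ᵥ q₀) = 0 := by
    have hq₀' : g⁻¹ *ᵥ q₀ = -((g⁻¹ * ωᵀ * C⁻¹) *ᵥ ((ω * g⁻¹) *ᵥ pm)) := by
      rw [hq₀, hP, sub_mulVec, one_mulVec, sub_sub_cancel_left, mulVec_neg]
      congr 1
      simp only [mulVec_mulVec, Matrix.mul_assoc]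
    rw [hq₀', dotProduct_neg, dotProduct_mulVec (v := d), neg_eq_zero]
    have hvm : d ᵥ* (g⁻¹ * ωᵀ * C⁻¹) = C⁻¹ *ᵥ ((ω * g⁻¹) *ᵥ d) := by
      rw [← mulVec_transpose, transpose_mul, transpose_mul, transpose_transpose,
        hginvT, hCinvT]
      simp only [mulVec_mulVec, Matrix.mul_assoc]
    rw [hvm, hdω, mulVec_zero, zero_dotProduct]
  have hcross' : q₀ ⬝ᵥ (g⁻¹ *ᵥ d) = 0 := by
    rw [dotProduct_mulVec, ← mulVec_transpose, hginvT, dotProduct_comm]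
    exact hcross
  -- expansion
  have hexp : (p - pm) ⬝ᵥ (g⁻¹ *ᵥ (p - pm)) =
      d ⬝ᵥ (g⁻¹ *ᵥ d) + q₀ ⬝ᵥ (g⁻¹ *ᵥ q₀) := by
    rw [hpd, mulVec_add, add_dotProduct, dotProduct_add, dotProduct_add, hcross, hcross']
    ring
  have hQd : 0 ≤ d ⬝ᵥ (g⁻¹ *ᵥ d) := by
    have := hginv.posSemidef.dotProduct_mulVec_nonneg d
    rwa [star_trivial] at this
  constructor
  · rw [hexp]; linarith
  · intro heq
    rw [hexp] at heq
    have hQd0 : d ⬝ᵥ (g⁻¹ *ᵥ d) = 0 := by linarith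
    have hd0 : d = 0 := by
      by_contra h
      have := hginv.dotProduct_mulVec_pos h
      rw [star_trivial, hQd0] at this
      exact lt_irrefl 0 this
    rw [hd] at hd0
    exact sub_eq_zero.mp hd0
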